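/- In a group G₁ with two elements x, y, the Peiffer commutator ⟨x,y⟩ = x y x⁻¹ (^{∂x}y)⁻¹, after the substitution x ↦ x⁻¹, y ↦ x⁻¹ y⁻¹ x, satisfies ⟨x⁻¹, x⁻¹y⁻¹x⟩ = [x⁻¹ · s(∂(x)), y], where s denotes the section and the action is by conjugation by s(∂(·)); consequently the Peiffer subgroup of the pre-crossed module (ker d₀, F₀, d₁) arising from a simplicial group level is generated by commutators [x⁻¹ s₀(d₁(x)), y]. -/
import Mathlib


/-- At the bottom of a simplicial group (level `F₁` over `F₀`, faces `d₀ d₁`,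
degeneracy `s₀` with `d₀ s₀ = d₁ s₀ = id`), `F₀` acts on `ker d₀` by
`ᵍx = s₀(g) x s₀(g)⁻¹` and `∂ = d₁` gives a pre-crossed module.  Writing
`⟨x,y⟩ = x y x⁻¹ (s₀(d₁ x) y s₀(d₁ x)⁻¹)⁻¹` for the Peiffer commutator and
`[a,b] = a⁻¹ b⁻¹ a b` for the commutator, the substitution `x ↦ x⁻¹`,
`y ↦ ˣ(y⁻¹)` turns a Peiffer commutator into (the inverse of) a commutator
`[x⁻¹ · s₀(d₁ x), y]`; consequently the Peiffer subgroup of the pre-crossed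
module `(ker d₀, F₀, d₁)` is generated by the commutators
`[x⁻¹ s₀(d₁ x), y]` with `x, y ∈ ker d₀`. -/
theorem stmt11 (F₀ F₁ : Type) [Group F₀] [Group F₁]
    (d₀ d₁ : F₁ →* F₀) (s₀ : F₀ →* F₁)
    (hs₀d₀ : ∀ g : F₀, d₀ (s₀ g) = g) (hs₀d₁ : ∀ g : F₀, d₁ (s₀ g) = g) :
    (∀ x y : F₁,
      x⁻¹ * (x * y⁻¹ * x⁻¹) * (x⁻¹)⁻¹ *
          (s₀ (d₁ x⁻¹) * (x * y⁻¹ * x⁻¹) * (s₀ (d₁ x⁻¹))⁻¹)⁻¹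
        = ((x⁻¹ * s₀ (d₁ x))⁻¹ * y⁻¹ * (x⁻¹ * s₀ (d₁ x)) * y)⁻¹) ∧
    Subgroup.closure
        {z : F₁ | ∃ x ∈ d₀.ker, ∃ y ∈ d₀.ker,
          z = x * y * x⁻¹ * (s₀ (d₁ x) * y * (s₀ (d₁ x))⁻¹)⁻¹}
      = Subgroup.closure
          {z : F₁ | ∃ x ∈ d₀.ker, ∃ y ∈ d₀.ker,
            z = (x⁻¹ * s₀ (d₁ x))⁻¹ * y⁻¹ * (x⁻¹ * s₀ (d₁ x)) * y} := by
  constructor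
  · intro x y
    simp only [map_inv]
    group
  · apply le_antisymm <;> rw [Subgroup.closure_le]
    · rintro z ⟨u, hu, v, hv, rfl⟩
      have hz : u * v * u⁻¹ * (s₀ (d₁ u) * v * (s₀ (d₁ u))⁻¹)⁻¹
          = (((u⁻¹)⁻¹ * s₀ (d₁ u⁻¹))⁻¹ * (u * v⁻¹ * u⁻¹)⁻¹ *
              ((u⁻¹)⁻¹ * s₀ (d₁ u⁻¹)) * (u * v⁻¹ * u⁻¹))⁻¹ := by
        simp only [map_inv]; group
      rw [hz]
      exact inv_mem (Subgroup.subset_closure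
        ⟨u⁻¹, inv_mem hu, u * v⁻¹ * u⁻¹,
          mul_mem (mul_mem hu (inv_mem hv)) (inv_mem hu), rfl⟩)
    · rintro z ⟨x, hx, y, hy, rfl⟩
      have hz : (x⁻¹ * s₀ (d₁ x))⁻¹ * y⁻¹ * (x⁻¹ * s₀ (d₁ x)) * y
          = (x⁻¹ * (x * y⁻¹ * x⁻¹) * (x⁻¹)⁻¹ *
              (s₀ (d₁ x⁻¹) * (x * y⁻¹ * x⁻¹) * (s₀ (d₁ x⁻¹))⁻¹)⁻¹)⁻¹ := by
        simp only [map_inv]; group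
      rw [hz]
      exact inv_mem (Subgroup.subset_closure
        ⟨x⁻¹, inv_mem hx, x * y⁻¹ * x⁻¹,
          mul_mem (mul_mem hx (inv_mem hy)) (inv_mem hx), rfl⟩)
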